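/- Let f and g be holomorphic function germs at 0 in ℂ. Then there exist holomorphic function germs a(w), b(z), e(z,w) at the origin such that the functions Z = z(1 + z f(z) + w a(w) + z w e(z,w)) and W = w(1 + w g(w) + z b(z) + z w e(z,w)) satisfy Z·W = z·w identically near (0,0). Moreover one may take a(w) = -g(w)/(1 + w g(w)) and b(z) = -f(z)/(1 + z f(z)). -/

import Mathlib

open Filter Topology

set_option maxHeartbeats 1000000 in
/-- Normal-form lemma for plumbing coordinates: separate holomorphic coordinate
changes `z ↦ z(1+zf(z))`, `w ↦ w(1+wg(w))` extend to `Z`, `W` with `Z·W = z·w`,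
with `a(w) = -g(w)/(1+wg(w))` and `b(z) = -f(z)/(1+zf(z))`. -/
theorem plumbing_normal_form (f g : ℂ → ℂ)
    (hf : AnalyticAt ℂ f 0) (hg : AnalyticAt ℂ g 0) :
    ∃ a b : ℂ → ℂ, ∃ e : ℂ × ℂ → ℂ,
      AnalyticAt ℂ a 0 ∧ AnalyticAt ℂ b 0 ∧ AnalyticAt ℂ e (0, 0) ∧
      (∀ᶠ w in 𝓝 (0 : ℂ), a w = -g w / (1 + w * g w)) ∧
      (∀ᶠ z in 𝓝 (0 : ℂ), b z = -f z / (1 + z * f z)) ∧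
      (∀ᶠ p : ℂ × ℂ in 𝓝 (0, 0),
        (p.1 * (1 + p.1 * f p.1 + p.2 * a p.2 + p.1 * p.2 * e p)) *
          (p.2 * (1 + p.2 * g p.2 + p.1 * b p.1 + p.1 * p.2 * e p)) = p.1 * p.2) := by
  set a : ℂ → ℂ := fun w => -g w / (1 + w * g w) with ha_def
  set b : ℂ → ℂ := fun z => -f z / (1 + z * f z) with hb_def
  set S : ℂ × ℂ → ℂ := fun p =>
    (1 + p.1 * f p.1 + p.2 * a p.2) + (1 + p.2 * g p.2 + p.1 * b p.1) with hS_def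
  set C : ℂ × ℂ → ℂ := fun p =>
    f p.1 * g p.2 * ((1 + p.1 * f p.1) * (1 + p.2 * g p.2) + 1) /
      ((1 + p.1 * f p.1) * (1 + p.2 * g p.2)) with hC_def
  set D : ℂ × ℂ → ℂ := fun p => S p ^ 2 - 4 * p.1 * p.2 * C p with hD_def
  set e : ℂ × ℂ → ℂ := fun p => -2 * C p / (S p + D p ^ (1/2 : ℂ)) with he_def
  -- analyticity of pieces
  have hfp : AnalyticAt ℂ (fun p : ℂ × ℂ => f p.1) (0, 0) :=
    AnalyticAt.comp (f := Prod.fst) (x := ((0:ℂ), (0:ℂ))) hf analyticAt_fst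
  have hgp : AnalyticAt ℂ (fun p : ℂ × ℂ => g p.2) (0, 0) :=
    AnalyticAt.comp (f := Prod.snd) (x := ((0:ℂ), (0:ℂ))) hg analyticAt_snd
  have hGa : AnalyticAt ℂ (fun w : ℂ => 1 + w * g w) 0 :=
    analyticAt_const.add ((analyticAt_id).mul hg)
  have hFa : AnalyticAt ℂ (fun z : ℂ => 1 + z * f z) 0 :=
    analyticAt_const.add ((analyticAt_id).mul hf)
  have haA : AnalyticAt ℂ a 0 := by
    apply (hg.neg).div hGa
    simp
  have hbA : AnalyticAt ℂ b 0 := by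
    apply (hf.neg).div hFa
    simp
  have hap : AnalyticAt ℂ (fun p : ℂ × ℂ => a p.2) (0, 0) :=
    AnalyticAt.comp (f := Prod.snd) (x := ((0:ℂ), (0:ℂ))) haA analyticAt_snd
  have hbp : AnalyticAt ℂ (fun p : ℂ × ℂ => b p.1) (0, 0) :=
    AnalyticAt.comp (f := Prod.fst) (x := ((0:ℂ), (0:ℂ))) hbA analyticAt_fst
  have hSA : AnalyticAt ℂ S (0, 0) := by
    apply AnalyticAt.add
    · exact (analyticAt_const.add (analyticAt_fst.mul hfp)).add (analyticAt_snd.mul hap)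
    · exact (analyticAt_const.add (analyticAt_snd.mul hgp)).add (analyticAt_fst.mul hbp)
  have hFGa : AnalyticAt ℂ (fun p : ℂ × ℂ => (1 + p.1 * f p.1) * (1 + p.2 * g p.2)) (0, 0) :=
    (analyticAt_const.add (analyticAt_fst.mul hfp)).mul
      (analyticAt_const.add (analyticAt_snd.mul hgp))
  have hCA : AnalyticAt ℂ C (0, 0) := by
    apply AnalyticAt.div ((hfp.mul hgp).mul (hFGa.add analyticAt_const)) hFGa
    simp
  have hDA : AnalyticAt ℂ D (0, 0) := by
    apply AnalyticAt.sub (hSA.pow 2)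
    exact ((analyticAt_const.mul analyticAt_fst).mul analyticAt_snd).mul hCA
  -- values at the origin
  have hS0 : S (0, 0) = 2 := by norm_num [hS_def]
  have hD0 : D (0, 0) = 4 := by
    have h2 : S 0 = 2 := hS0
    simp [hD_def, h2]
    rw [hS0]; norm_num
  have hsqrt4 : (4 : ℂ) ^ (1/2 : ℂ) = 2 := by
    have h := Complex.ofReal_cpow (x := 4) (by norm_num) (1/2)
    have h4 : ((4:ℝ) ^ ((1:ℝ)/2)) = 2 := by
      rw [show (4:ℝ) = 2 ^ (2:ℕ) by norm_num, ← Real.rpow_natCast 2 2,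
        ← Real.rpow_mul (by norm_num)]
      norm_num
    rw [h4] at h
    norm_num at h
    exact h.symm
  have hsqrtA : AnalyticAt ℂ (fun p => D p ^ (1/2 : ℂ)) (0, 0) := by
    apply hDA.cpow analyticAt_const
    rw [hD0]
    exact Or.inl (by norm_num)
  have heA : AnalyticAt ℂ e (0, 0) := by
    apply (analyticAt_const.mul hCA).div (hSA.add hsqrtA)
    show S (0, 0) + D (0, 0) ^ (1/2 : ℂ) ≠ 0
    rw [hS0, hD0, hsqrt4]
    norm_num
  refine ⟨a, b, e, haA, hbA, heA, Eventually.of_forall fun w => rfl,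
    Eventually.of_forall fun z => rfl, ?_⟩
  -- eventual nonvanishing
  have hFne : ∀ᶠ p : ℂ × ℂ in 𝓝 (0, 0), 1 + p.1 * f p.1 ≠ 0 := by
    apply (analyticAt_const.add (analyticAt_fst.mul hfp)).continuousAt.eventually_ne
    simp
  have hGne : ∀ᶠ p : ℂ × ℂ in 𝓝 (0, 0), 1 + p.2 * g p.2 ≠ 0 := by
    apply (analyticAt_const.add (analyticAt_snd.mul hgp)).continuousAt.eventually_ne
    simp
  have hDne : ∀ᶠ p : ℂ × ℂ in 𝓝 (0, 0), D p ≠ 0 := by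
    apply hDA.continuousAt.eventually_ne
    rw [hD0]; norm_num
  have hden : ∀ᶠ p : ℂ × ℂ in 𝓝 (0, 0), S p + D p ^ (1/2 : ℂ) ≠ 0 := by
    apply (hSA.continuousAt.add hsqrtA.continuousAt).eventually_ne
    show S (0, 0) + D (0, 0) ^ (1/2 : ℂ) ≠ 0
    rw [hS0, hD0, hsqrt4]; norm_num
  filter_upwards [hFne, hGne, hDne, hden] with p hF hG hD hd
  have hs2 : (D p ^ (1/2 : ℂ)) ^ 2 = S p ^ 2 - 4 * p.1 * p.2 * C p := by
    rw [sq, ← Complex.cpow_add _ _ hD]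
    norm_num
    rfl
  have haw : a p.2 * (1 + p.2 * g p.2) = -g p.2 := by
    rw [ha_def]; field_simp
    rw [mul_div_assoc, div_self (by rw [mul_comm]; exact hG), mul_one]
  have hbz : b p.1 * (1 + p.1 * f p.1) = -f p.1 := by
    rw [hb_def]; field_simp
    rw [mul_div_assoc, div_self (by rw [mul_comm]; exact hF), mul_one]
  have hCeq : C p * ((1 + p.1 * f p.1) * (1 + p.2 * g p.2)) =
      f p.1 * g p.2 * ((1 + p.1 * f p.1) * (1 + p.2 * g p.2) + 1) := by
    rw [hC_def]
    field_simp
    have hXY : (1 + f p.1 * p.1) * (1 + g p.2 * p.2) ≠ 0 := by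
      rw [mul_comm (f p.1), mul_comm (g p.2)]; exact mul_ne_zero hF hG
    rw [div_eq_iff hXY]; ring
  have he : e p * (S p + D p ^ (1/2 : ℂ)) = -2 * C p := by
    rw [he_def]; field_simp
  have hSeq : S p = (1 + p.1 * f p.1 + p.2 * a p.2) + (1 + p.2 * g p.2 + p.1 * b p.1) := rfl
  clear_value a b S C D e
  have hAB : (1 + p.1 * f p.1 + p.2 * a p.2) * (1 + p.2 * g p.2 + p.1 * b p.1) =
      1 + p.1 * p.2 * C p := by
    have hFG : (1 + p.1 * f p.1) * (1 + p.2 * g p.2) ≠ 0 := mul_ne_zero hF hG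
    have key : ((1 + p.1 * f p.1 + p.2 * a p.2) * (1 + p.2 * g p.2 + p.1 * b p.1)) *
        ((1 + p.1 * f p.1) * (1 + p.2 * g p.2)) =
        (1 + p.1 * p.2 * C p) * ((1 + p.1 * f p.1) * (1 + p.2 * g p.2)) := by
      linear_combination (p.2 * (1 + p.2 * g p.2 + p.1 * b p.1) * (1 + p.1 * f p.1)) * haw +
        (p.1 * ((1 + p.1 * f p.1) * (1 + p.2 * g p.2) - p.2 * g p.2)) * hbz -
        (p.1 * p.2) * hCeq
    exact mul_right_cancel₀ hFG key
  have hkey : C p + e p * S p + p.1 * p.2 * e p ^ 2 = 0 := by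
    have h2 : (C p + e p * S p + p.1 * p.2 * e p ^ 2) * (S p + D p ^ (1/2 : ℂ)) ^ 2 = 0 := by
      linear_combination (S p * (S p + D p ^ (1/2 : ℂ)) +
        p.1 * p.2 * (e p * (S p + D p ^ (1/2 : ℂ)) - 2 * C p)) * he + C p * hs2
    rcases mul_eq_zero.mp h2 with h | h
    · exact h
    · exact absurd h (pow_ne_zero 2 hd)
  linear_combination (p.1 * p.2) * hAB + (p.1^2 * p.2^2) * hkey -
    (p.1^2 * p.2^2 * e p) * hSeq
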